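/- Let H be a Hopf algebra with bijective antipode S and P a right H-comodule algebra. The assignment g_l ↦ g_r := g_l ∘ S⁻¹ defines a bijection between the set of convolution invertible linear maps g_l : H → P with g_l(1)=1 and Δ_P(g_l(h)) = Σ g_l(h₂) ⊗ S(h₁)h₃ (data of left gauge transformations) and the set of twisted convolution invertible linear maps g_r : H → P with g_r(1)=1 and Δ_P(g_r(h)) = Σ g_r(h₂) ⊗ h₃ S⁻¹(h₁) (data of right gauge transformations). -/

import Mathlib

open TensorProduct

variable {k : Type*} [Field k]
variable {H : Type*} [Ring H] [HopfAlgebra k H]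
variable {P : Type*} [Ring P] [Algebra k P]

noncomputable def conv (f g : H →ₗ[k] P) : H →ₗ[k] P :=
  LinearMap.mul' k P ∘ₗ TensorProduct.map f g ∘ₗ Coalgebra.comul

/-- Twisted convolution: `(f ⋆' g)(h) = Σ f(h₂) g(h₁)`. -/
noncomputable def twistedConv (f g : H →ₗ[k] P) : H →ₗ[k] P :=
  LinearMap.mul' k P ∘ₗ TensorProduct.map f g ∘ₗ
    (TensorProduct.comm k H H).toLinearMap ∘ₗ Coalgebra.comul

noncomputable def convUnit : H →ₗ[k] P :=
  Algebra.linearMap k P ∘ₗ Coalgebra.counit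

/-- `h ↦ Σ g(h₂) ⊗ S(h₁)h₃`. -/
noncomputable def adCoactL (g : H →ₗ[k] P) : H →ₗ[k] P ⊗[k] H :=
  (TensorProduct.map g
      (LinearMap.mul' k H ∘ₗ
        TensorProduct.map (HopfAlgebra.antipode (R := k)) LinearMap.id)) ∘ₗ
    (TensorProduct.assoc k H H H).toLinearMap ∘ₗ
    (TensorProduct.map (TensorProduct.comm k H H).toLinearMap LinearMap.id) ∘ₗ
    (TensorProduct.map (Coalgebra.comul : H →ₗ[k] H ⊗[k] H) LinearMap.id) ∘ₗ
    (Coalgebra.comul : H →ₗ[k] H ⊗[k] H)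

/-- `h ↦ Σ g(h₂) ⊗ h₃ S⁻¹(h₁)`. -/
noncomputable def adCoactR (Sinv : H →ₗ[k] H) (g : H →ₗ[k] P) : H →ₗ[k] P ⊗[k] H :=
  (TensorProduct.map g
      (LinearMap.mul' k H ∘ₗ (TensorProduct.comm k H H).toLinearMap ∘ₗ
        TensorProduct.map Sinv LinearMap.id)) ∘ₗ
    (TensorProduct.assoc k H H H).toLinearMap ∘ₗ
    (TensorProduct.map (TensorProduct.comm k H H).toLinearMap LinearMap.id) ∘ₗ
    (TensorProduct.map (Coalgebra.comul : H →ₗ[k] H ⊗[k] H) LinearMap.id) ∘ₗ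
    (Coalgebra.comul : H →ₗ[k] H ⊗[k] H)

/-- Data of a left gauge transformation. -/
def LeftData (ΔP : P →ₗ[k] P ⊗[k] H) (g : H →ₗ[k] P) : Prop :=
  g 1 = 1 ∧ ΔP ∘ₗ g = adCoactL g ∧
  ∃ g' : H →ₗ[k] P, conv g g' = (convUnit : H →ₗ[k] P) ∧
    conv g' g = (convUnit : H →ₗ[k] P)

/-- Data of a right gauge transformation. -/
def RightData (ΔP : P →ₗ[k] P ⊗[k] H) (Sinv : H →ₗ[k] H) (g : H →ₗ[k] P) : Prop :=
  g 1 = 1 ∧ ΔP ∘ₗ g = adCoactR Sinv g ∧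
  ∃ g' : H →ₗ[k] P, twistedConv g g' = (convUnit : H →ₗ[k] P) ∧
    twistedConv g' g = (convUnit : H →ₗ[k] P)


section Aux
open Coalgebra

lemma conv_repr (f g : H →ₗ[k] P) (h : H) (r : Coalgebra.Repr k h (H × H)) :
    conv f g h = ∑ i ∈ r.index, f (r.left i) * g (r.right i) := by
  simp only [conv, LinearMap.comp_apply, ← r.eq, map_sum, TensorProduct.map_tmul,
    LinearMap.mul'_apply]

lemma rT_counit (h : H) :
    TensorProduct.map (Coalgebra.counit (R := k)) (LinearMap.id (M := H)) (Coalgebra.comul h)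
      = (1 : k) ⊗ₜ[k] h :=
  Coalgebra.rTensor_counit_comul h

lemma lT_counit (h : H) :
    TensorProduct.map (LinearMap.id (M := H)) (Coalgebra.counit (R := k)) (Coalgebra.comul h)
      = h ⊗ₜ[k] (1 : k) :=
  Coalgebra.lTensor_counit_comul h

lemma conv_unit_left (f : H →ₗ[k] P) : conv convUnit f = f := by
  ext h
  have e : TensorProduct.map (convUnit : H →ₗ[k] P) f
      = TensorProduct.map (Algebra.linearMap k P) f ∘ₗ
        TensorProduct.map Coalgebra.counit LinearMap.id := by
    rw [← TensorProduct.map_comp, LinearMap.comp_id]; rfl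
  simp [conv, e, rT_counit]

lemma conv_unit_right (f : H →ₗ[k] P) : conv f convUnit = f := by
  ext h
  have e : TensorProduct.map f (convUnit : H →ₗ[k] P)
      = TensorProduct.map f (Algebra.linearMap k P) ∘ₗ
        TensorProduct.map LinearMap.id Coalgebra.counit := by
    rw [← TensorProduct.map_comp, LinearMap.comp_id]; rfl
  simp [conv, e, lT_counit, Algebra.algebraMap_eq_smul_one]

lemma conv_assoc (f g e : H →ₗ[k] P) : conv (conv f g) e = conv f (conv g e) := by
  ext h
  set r := ℛ k h
  set a₁ : (i : r.ι) → Coalgebra.Repr k (r.left i) (H × H) := fun i => ℛ k (r.left i) with ha₁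
  set a₂ : (i : r.ι) → Coalgebra.Repr k (r.right i) (H × H) := fun i => ℛ k (r.right i) with ha₂
  have key := Coalgebra.sum_tmul_tmul_eq r a₁ a₂
  have key2 := congrArg (LinearMap.mul' k P ∘ₗ
    TensorProduct.map f (LinearMap.mul' k P ∘ₗ TensorProduct.map g e)) key
  simp only [map_sum, LinearMap.comp_apply, TensorProduct.map_tmul, LinearMap.mul'_apply] at key2
  rw [conv_repr (conv f g) e h r, conv_repr f (conv g e) h r]
  calc ∑ i ∈ r.index, conv f g (r.left i) * e (r.right i)
      = ∑ i ∈ r.index, ∑ j ∈ (a₁ i).index,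
          f ((a₁ i).left j) * (g ((a₁ i).right j) * e (r.right i)) := by
        refine Finset.sum_congr rfl fun i _ => ?_
        rw [conv_repr f g _ (a₁ i), Finset.sum_mul]
        exact Finset.sum_congr rfl fun j _ => mul_assoc _ _ _
    _ = ∑ i ∈ r.index, ∑ j ∈ (a₂ i).index,
          f (r.left i) * (g ((a₂ i).left j) * e ((a₂ i).right j)) := key2
    _ = ∑ i ∈ r.index, f (r.left i) * conv g e (r.right i) := by
        refine Finset.sum_congr rfl fun i _ => ?_
        rw [conv_repr g e _ (a₂ i), Finset.mul_sum]

section Mult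
variable {Q : Type*} [Ring Q] [Algebra k Q]

lemma conv_comp_mult (φ : P →ₗ[k] Q) (hφ : ∀ a b : P, φ (a * b) = φ a * φ b)
    (f g : H →ₗ[k] P) : conv (φ ∘ₗ f) (φ ∘ₗ g) = φ ∘ₗ conv f g := by
  ext h
  rw [LinearMap.comp_apply, conv_repr (φ ∘ₗ f) (φ ∘ₗ g) h (ℛ k h), conv_repr f g h (ℛ k h),
    map_sum]
  exact Finset.sum_congr rfl fun i _ => (hφ _ _).symm

lemma comp_convUnit (φ : P →ₗ[k] Q) (hφ1 : φ 1 = 1) :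
    φ ∘ₗ (convUnit : H →ₗ[k] P) = convUnit := by
  ext h
  simp [convUnit, Algebra.algebraMap_eq_smul_one, hφ1]

end Mult

local notation "S" => HopfAlgebra.antipode (R := k) (A := H)

lemma conv_antipode_id : conv (S) (LinearMap.id : H →ₗ[k] H) = convUnit := by
  have : TensorProduct.map (S) (LinearMap.id : H →ₗ[k] H) = LinearMap.rTensor H (S) := rfl
  simp only [conv, this, convUnit]
  rw [HopfAlgebra.mul_antipode_rTensor_comul]

lemma conv_id_antipode : conv (LinearMap.id : H →ₗ[k] H) (S) = convUnit := by
  have : TensorProduct.map (LinearMap.id : H →ₗ[k] H) (S) = LinearMap.lTensor H (S) := rfl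
  simp only [conv, this, convUnit]
  rw [HopfAlgebra.mul_antipode_lTensor_comul]

lemma antipode_one' : (S) (1 : H) = (1 : H) := by
  have := LinearMap.congr_fun (conv_antipode_id (k := k) (H := H)) 1
  simpa [conv_repr _ _ _ (ℛ k (1:H)), convUnit] using
    by
      have h1 := LinearMap.congr_fun (HopfAlgebra.mul_antipode_rTensor_comul (R := k) (A := H)) 1
      simpa [Bialgebra.comul_one, Algebra.TensorProduct.one_def] using h1

noncomputable abbrev αH : H →ₗ[k] H ⊗[k] H := TensorProduct.mk k H H 1
noncomputable abbrev βH : H →ₗ[k] H ⊗[k] H := (TensorProduct.mk k H H).flip 1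

lemma αH_mult (a b : H) : (αH (a * b) : H ⊗[k] H) = αH a * αH b := by
  simp [Algebra.TensorProduct.tmul_mul_tmul]

lemma βH_mult (a b : H) : (βH (a * b) : H ⊗[k] H) = βH a * βH b := by
  simp [Algebra.TensorProduct.tmul_mul_tmul]

lemma comul_eq_conv : (Coalgebra.comul : H →ₗ[k] H ⊗[k] H) = conv βH αH := by
  ext h
  rw [conv_repr _ _ h (ℛ k h), ← (ℛ k h).eq]
  exact Finset.sum_congr rfl fun i _ => by
    simp [Algebra.TensorProduct.tmul_mul_tmul]

lemma antiComul_eq_conv :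
    (TensorProduct.map (S) (S) ∘ₗ (TensorProduct.comm k H H).toLinearMap ∘ₗ Coalgebra.comul :
      H →ₗ[k] H ⊗[k] H) = conv (αH ∘ₗ S) (βH ∘ₗ S) := by
  ext h
  rw [conv_repr _ _ h (ℛ k h)]
  simp only [LinearMap.comp_apply, ← (ℛ k h).eq, map_sum, TensorProduct.comm_tmul,
    TensorProduct.map_tmul]
  exact Finset.sum_congr rfl fun i _ => by
    simp [Algebra.TensorProduct.tmul_mul_tmul]

lemma conv_comul_comulS :
    conv (Coalgebra.comul : H →ₗ[k] H ⊗[k] H) (Coalgebra.comul ∘ₗ S) = convUnit := by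
  have e := conv_comp_mult (Coalgebra.comul : H →ₗ[k] H ⊗[k] H) Bialgebra.comul_mul
    LinearMap.id (S)
  rw [LinearMap.comp_id] at e
  rw [e, conv_id_antipode, comp_convUnit _ Bialgebra.comul_one]

lemma antiComul_conv_comul :
    conv ((TensorProduct.map (S) (S) ∘ₗ (TensorProduct.comm k H H).toLinearMap ∘ₗ
      Coalgebra.comul : H →ₗ[k] H ⊗[k] H)) Coalgebra.comul = convUnit := by
  rw [antiComul_eq_conv, comul_eq_conv, conv_assoc, ← conv_assoc (βH ∘ₗ S) βH αH]
  have hBC : conv ((βH ∘ₗ S : H →ₗ[k] H ⊗[k] H)) βH = convUnit := by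
    have e := conv_comp_mult (βH : H →ₗ[k] H ⊗[k] H) βH_mult (S) LinearMap.id
    rw [LinearMap.comp_id] at e
    rw [e, conv_antipode_id, comp_convUnit]
    simp [Algebra.TensorProduct.one_def]
  rw [hBC, conv_unit_left]
  have e := conv_comp_mult (αH : H →ₗ[k] H ⊗[k] H) αH_mult (S) LinearMap.id
  rw [LinearMap.comp_id] at e
  rw [e, conv_antipode_id, comp_convUnit]
  simp [Algebra.TensorProduct.one_def]

lemma comul_antipode :
    (Coalgebra.comul ∘ₗ S : H →ₗ[k] H ⊗[k] H)
      = TensorProduct.map (S) (S) ∘ₗ (TensorProduct.comm k H H).toLinearMap ∘ₗ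
        Coalgebra.comul := by
  have h1 := conv_comul_comulS (k := k) (H := H)
  have h2 := antiComul_conv_comul (k := k) (H := H)
  calc (Coalgebra.comul ∘ₗ S : H →ₗ[k] H ⊗[k] H)
      = conv convUnit (Coalgebra.comul ∘ₗ S) := (conv_unit_left _).symm
    _ = conv (conv (TensorProduct.map (S) (S) ∘ₗ (TensorProduct.comm k H H).toLinearMap ∘ₗ
          Coalgebra.comul) Coalgebra.comul) (Coalgebra.comul ∘ₗ S) := by rw [h2]
    _ = conv (TensorProduct.map (S) (S) ∘ₗ (TensorProduct.comm k H H).toLinearMap ∘ₗ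
          Coalgebra.comul) (conv Coalgebra.comul (Coalgebra.comul ∘ₗ S)) := conv_assoc _ _ _
    _ = _ := by rw [h1, conv_unit_right]

lemma counit_antipode :
    (Coalgebra.counit ∘ₗ S : H →ₗ[k] k) = Coalgebra.counit := by
  have hu : (convUnit : H →ₗ[k] k) = Coalgebra.counit := by
    ext h; simp [convUnit, Algebra.algebraMap_eq_smul_one, smul_eq_mul]
  have key : conv (Coalgebra.counit ∘ₗ S : H →ₗ[k] k) Coalgebra.counit = Coalgebra.counit := by
    have e := conv_comp_mult (Coalgebra.counit : H →ₗ[k] k) Bialgebra.counit_mul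
      (S) LinearMap.id
    rw [LinearMap.comp_id] at e
    rw [e, conv_antipode_id, comp_convUnit _ Bialgebra.counit_one, hu]
  calc (Coalgebra.counit ∘ₗ S : H →ₗ[k] k)
      = conv (Coalgebra.counit ∘ₗ S : H →ₗ[k] k) convUnit := (conv_unit_right _).symm
    _ = conv (Coalgebra.counit ∘ₗ S : H →ₗ[k] k) Coalgebra.counit := by rw [hu]
    _ = Coalgebra.counit := key

section SinvLemmas
variable (Sinv : H →ₗ[k] H)
variable (hS1 : (HopfAlgebra.antipode (R := k) (A := H)) ∘ₗ Sinv = LinearMap.id)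
  (hS2 : Sinv ∘ₗ (HopfAlgebra.antipode (R := k) (A := H)) = LinearMap.id)

include hS1 hS2 in
lemma comul_Sinv : (Coalgebra.comul ∘ₗ Sinv : H →ₗ[k] H ⊗[k] H)
    = TensorProduct.map Sinv Sinv ∘ₗ (TensorProduct.comm k H H).toLinearMap ∘ₗ
      Coalgebra.comul := by
  ext h
  have e := LinearMap.congr_fun (comul_antipode (k := k) (H := H)) (Sinv h)
  simp only [LinearMap.comp_apply] at e
  have hSh : (S) (Sinv h) = h := LinearMap.congr_fun hS1 h
  rw [hSh] at e
  have key : ∀ y : H ⊗[k] H,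
      TensorProduct.map Sinv Sinv ((TensorProduct.comm k H H)
        (TensorProduct.map (S) (S) ((TensorProduct.comm k H H) y))) = y := by
    intro y
    induction y using TensorProduct.induction_on with
    | zero => simp
    | tmul a b =>
        simp only [TensorProduct.comm_tmul, TensorProduct.map_tmul]
        rw [show Sinv ((S) a) = a from LinearMap.congr_fun hS2 a,
          show Sinv ((S) b) = b from LinearMap.congr_fun hS2 b]
    | add x y hx hy => simp [map_add, hx, hy]
  simp only [LinearMap.comp_apply, LinearEquiv.coe_coe]
  rw [e]
  exact (key _).symm

include hS1 hS2 in
lemma counit_Sinv : (Coalgebra.counit ∘ₗ Sinv : H →ₗ[k] k) = Coalgebra.counit := by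
  have : (Coalgebra.counit ∘ₗ Sinv : H →ₗ[k] k)
      = (Coalgebra.counit ∘ₗ (S)) ∘ₗ Sinv := by
    rw [counit_antipode]
  rw [this, LinearMap.comp_assoc, hS1, LinearMap.comp_id]

include hS2 in
lemma Sinv_one : Sinv 1 = 1 := by
  have := LinearMap.congr_fun hS2 (1 : H)
  rwa [LinearMap.comp_apply, antipode_one', LinearMap.id_apply] at this

end SinvLemmas

/-- Repr of `S h` from a Repr of `h`. -/
noncomputable def reprS (h : H) (r : Coalgebra.Repr k h (H × H)) : Coalgebra.Repr k ((S) h) (H × H) where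
  index := r.index
  left i := (S) (r.right i)
  right i := (S) (r.left i)
  eq := by
    have e := LinearMap.congr_fun (comul_antipode (k := k) (H := H)) h
    simp only [LinearMap.comp_apply, LinearEquiv.coe_coe] at e
    rw [e, ← r.eq]
    simp [map_sum]

/-- Repr of `Sinv h` from a Repr of `h`. -/
noncomputable def reprSinv (Sinv : H →ₗ[k] H)
    (hS1 : (S) ∘ₗ Sinv = LinearMap.id) (hS2 : Sinv ∘ₗ (S) = LinearMap.id)
    (h : H) (r : Coalgebra.Repr k h (H × H)) : Coalgebra.Repr k (Sinv h) (H × H) where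
  index := r.index
  left i := Sinv (r.right i)
  right i := Sinv (r.left i)
  eq := by
    have e := LinearMap.congr_fun (comul_Sinv Sinv hS1 hS2) h
    simp only [LinearMap.comp_apply, LinearEquiv.coe_coe] at e
    rw [e, ← r.eq]
    simp [map_sum]

lemma twistedConv_repr (f g : H →ₗ[k] P) (h : H) (r : Coalgebra.Repr k h (H × H)) :
    twistedConv f g h = ∑ i ∈ r.index, f (r.right i) * g (r.left i) := by
  simp only [twistedConv, LinearMap.comp_apply, LinearEquiv.coe_coe, ← r.eq, map_sum,
    TensorProduct.comm_tmul, TensorProduct.map_tmul, LinearMap.mul'_apply]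

set_option maxHeartbeats 1000000 in
set_option synthInstance.maxHeartbeats 1000000 in
lemma adCoactL_repr (g : H →ₗ[k] P) (h : H) (r : Coalgebra.Repr k h (H × H))
    (a : ∀ i : r.ι, Coalgebra.Repr k (r.left i) (H × H)) :
    adCoactL g h = ∑ i ∈ r.index, ∑ j ∈ (a i).index,
      g ((a i).right j) ⊗ₜ[k] ((S) ((a i).left j) * r.right i) := by
  simp only [adCoactL, LinearMap.comp_apply, LinearEquiv.coe_coe]
  rw [← r.eq]
  simp only [map_sum, TensorProduct.map_tmul, LinearMap.id_coe, id_eq]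
  refine Finset.sum_congr rfl fun i _ => ?_
  rw [← (a i).eq]
  simp [TensorProduct.sum_tmul, map_sum, TensorProduct.map_tmul, TensorProduct.comm_tmul,
    TensorProduct.assoc_tmul, LinearMap.mul'_apply]

set_option maxHeartbeats 1000000 in
set_option synthInstance.maxHeartbeats 1000000 in
lemma adCoactR_repr (Sinv : H →ₗ[k] H) (g : H →ₗ[k] P) (h : H) (r : Coalgebra.Repr k h (H × H))
    (a : ∀ i : r.ι, Coalgebra.Repr k (r.left i) (H × H)) :
    adCoactR Sinv g h = ∑ i ∈ r.index, ∑ j ∈ (a i).index,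
      g ((a i).right j) ⊗ₜ[k] (r.right i * Sinv ((a i).left j)) := by
  simp only [adCoactR, LinearMap.comp_apply, LinearEquiv.coe_coe]
  rw [← r.eq]
  simp only [map_sum, TensorProduct.map_tmul, LinearMap.id_coe, id_eq]
  refine Finset.sum_congr rfl fun i _ => ?_
  rw [← (a i).eq]
  simp [TensorProduct.sum_tmul, map_sum, TensorProduct.map_tmul, TensorProduct.comm_tmul,
    TensorProduct.assoc_tmul, LinearMap.mul'_apply]

lemma conv_comp_antipode (f f' : H →ₗ[k] P) :
    conv (f ∘ₗ S) (f' ∘ₗ S) = twistedConv f f' ∘ₗ S := by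
  ext h
  rw [LinearMap.comp_apply, conv_repr _ _ h (ℛ k h),
    twistedConv_repr f f' ((S) h) (reprS h (ℛ k h))]
  rfl

lemma twistedConv_comp_Sinv (Sinv : H →ₗ[k] H)
    (hS1 : (HopfAlgebra.antipode (R := k) (A := H)) ∘ₗ Sinv = LinearMap.id)
    (hS2 : Sinv ∘ₗ (HopfAlgebra.antipode (R := k) (A := H)) = LinearMap.id)
    (f f' : H →ₗ[k] P) :
    twistedConv (f ∘ₗ Sinv) (f' ∘ₗ Sinv) = conv f f' ∘ₗ Sinv := by
  ext h
  rw [LinearMap.comp_apply, twistedConv_repr _ _ h (ℛ k h),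
    conv_repr f f' (Sinv h) (reprSinv Sinv hS1 hS2 h (ℛ k h))]
  rfl

lemma convUnit_comp_antipode : (convUnit : H →ₗ[k] P) ∘ₗ S = convUnit := by
  ext h
  have := LinearMap.congr_fun (counit_antipode (k := k) (H := H)) h
  simp only [LinearMap.comp_apply] at this ⊢
  simp [convUnit, this]

lemma convUnit_comp_Sinv (Sinv : H →ₗ[k] H)
    (hS1 : (HopfAlgebra.antipode (R := k) (A := H)) ∘ₗ Sinv = LinearMap.id)
    (hS2 : Sinv ∘ₗ (HopfAlgebra.antipode (R := k) (A := H)) = LinearMap.id) :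
    (convUnit : H →ₗ[k] P) ∘ₗ Sinv = convUnit := by
  ext h
  have := LinearMap.congr_fun (counit_Sinv Sinv hS1 hS2) h
  simp only [LinearMap.comp_apply] at this ⊢
  simp [convUnit, this]

lemma adCoactL_comp (g : H →ₗ[k] P) (u : H →ₗ[k] H) :
    adCoactL (g ∘ₗ u) = (TensorProduct.map g LinearMap.id) ∘ₗ adCoactL u := by
  unfold adCoactL
  rw [show (TensorProduct.map (g ∘ₗ u)
      (LinearMap.mul' k H ∘ₗ
        TensorProduct.map (HopfAlgebra.antipode (R := k)) LinearMap.id))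
      = TensorProduct.map g LinearMap.id ∘ₗ TensorProduct.map u
        (LinearMap.mul' k H ∘ₗ
          TensorProduct.map (HopfAlgebra.antipode (R := k)) LinearMap.id) from by
    rw [← TensorProduct.map_comp, LinearMap.id_comp]]
  simp only [LinearMap.comp_assoc]

lemma adCoactR_comp (Sinv : H →ₗ[k] H) (g : H →ₗ[k] P) (u : H →ₗ[k] H) :
    adCoactR Sinv (g ∘ₗ u) = (TensorProduct.map g LinearMap.id) ∘ₗ adCoactR Sinv u := by
  unfold adCoactR
  rw [show (TensorProduct.map (g ∘ₗ u)
      (LinearMap.mul' k H ∘ₗ (TensorProduct.comm k H H).toLinearMap ∘ₗ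
        TensorProduct.map Sinv LinearMap.id))
      = TensorProduct.map g LinearMap.id ∘ₗ TensorProduct.map u
        (LinearMap.mul' k H ∘ₗ (TensorProduct.comm k H H).toLinearMap ∘ₗ
          TensorProduct.map Sinv LinearMap.id) from by
    rw [← TensorProduct.map_comp, LinearMap.id_comp]]
  simp only [LinearMap.comp_assoc]

set_option maxHeartbeats 1000000 in
set_option synthInstance.maxHeartbeats 1000000 in
lemma K2 (Sinv : H →ₗ[k] H)
    (hS1 : (HopfAlgebra.antipode (R := k) (A := H)) ∘ₗ Sinv = LinearMap.id)
    (hS2 : Sinv ∘ₗ (HopfAlgebra.antipode (R := k) (A := H)) = LinearMap.id) :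
    adCoactR Sinv (LinearMap.id : H →ₗ[k] H) ∘ₗ (S)
      = adCoactL (S : H →ₗ[k] H) := by
  ext h
  set r := ℛ k h
  set a : (i : r.ι) → Coalgebra.Repr k (r.left i) (H × H) := fun i => ℛ k (r.left i) with ha
  set p : (i : r.ι) → Coalgebra.Repr k (r.right i) (H × H) := fun i => ℛ k (r.right i) with hp
  have key := Coalgebra.sum_tmul_tmul_eq r a p
  set L : H ⊗[k] (H ⊗[k] H) →ₗ[k] H ⊗[k] H :=
    (TensorProduct.map (S)
      (LinearMap.mul' k H ∘ₗ TensorProduct.map (S) LinearMap.id)) ∘ₗ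
      (TensorProduct.assoc k H H H).toLinearMap ∘ₗ
      (TensorProduct.map (TensorProduct.comm k H H).toLinearMap LinearMap.id) ∘ₗ
      (TensorProduct.assoc k H H H).symm.toLinearMap with hL
  have key2 := congrArg L key
  simp only [hL, map_sum, LinearMap.comp_apply, LinearEquiv.coe_coe,
    TensorProduct.assoc_symm_tmul, TensorProduct.map_tmul, TensorProduct.comm_tmul,
    TensorProduct.assoc_tmul, LinearMap.mul'_apply, LinearMap.id_coe, id_eq] at key2
  rw [LinearMap.comp_apply,
    adCoactR_repr Sinv LinearMap.id ((S) h) (reprS h r) (fun i => reprS (r.right i) (p i)),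
    adCoactL_repr (S : H →ₗ[k] H) h r a]
  refine Eq.trans (Finset.sum_congr rfl fun i _ => Finset.sum_congr rfl fun j _ => ?_)
    key2.symm
  simp only [reprS, LinearMap.id_coe, id_eq]
  rw [show Sinv ((S) ((p i).right j)) = (p i).right j from LinearMap.congr_fun hS2 _]

set_option maxHeartbeats 1000000 in
set_option synthInstance.maxHeartbeats 1000000 in
lemma K1 (Sinv : H →ₗ[k] H)
    (hS1 : (HopfAlgebra.antipode (R := k) (A := H)) ∘ₗ Sinv = LinearMap.id)
    (hS2 : Sinv ∘ₗ (HopfAlgebra.antipode (R := k) (A := H)) = LinearMap.id) :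
    adCoactL (LinearMap.id : H →ₗ[k] H) ∘ₗ Sinv = adCoactR Sinv Sinv := by
  ext h
  set r := ℛ k h
  set a : (i : r.ι) → Coalgebra.Repr k (r.left i) (H × H) := fun i => ℛ k (r.left i) with ha
  set p : (i : r.ι) → Coalgebra.Repr k (r.right i) (H × H) := fun i => ℛ k (r.right i) with hp
  have key := Coalgebra.sum_tmul_tmul_eq r a p
  set L : H ⊗[k] (H ⊗[k] H) →ₗ[k] H ⊗[k] H :=
    (TensorProduct.map Sinv
      (LinearMap.mul' k H ∘ₗ (TensorProduct.comm k H H).toLinearMap ∘ₗ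
        TensorProduct.map Sinv LinearMap.id)) ∘ₗ
      (TensorProduct.assoc k H H H).toLinearMap ∘ₗ
      (TensorProduct.map (TensorProduct.comm k H H).toLinearMap LinearMap.id) ∘ₗ
      (TensorProduct.assoc k H H H).symm.toLinearMap with hL
  have key2 := congrArg L key
  simp only [hL, map_sum, LinearMap.comp_apply, LinearEquiv.coe_coe,
    TensorProduct.assoc_symm_tmul, TensorProduct.map_tmul, TensorProduct.comm_tmul,
    TensorProduct.assoc_tmul, LinearMap.mul'_apply, LinearMap.id_coe, id_eq] at key2
  rw [LinearMap.comp_apply,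
    adCoactL_repr LinearMap.id (Sinv h) (reprSinv Sinv hS1 hS2 h r)
      (fun i => reprSinv Sinv hS1 hS2 (r.right i) (p i)),
    adCoactR_repr Sinv Sinv h r a]
  refine Eq.trans (Finset.sum_congr rfl fun i _ => Finset.sum_congr rfl fun j _ => ?_)
    key2.symm
  simp only [reprSinv, LinearMap.id_coe, id_eq]
  rw [show (S) (Sinv ((p i).right j)) = (p i).right j from LinearMap.congr_fun hS1 _]


end Aux

theorem statement_8 (ΔP : P →ₗ[k] P ⊗[k] H)
    (hP1 : ΔP 1 = 1)
    (hcoassoc : (TensorProduct.assoc k P H H).toLinearMap ∘ₗ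
        (TensorProduct.map ΔP LinearMap.id) ∘ₗ ΔP
      = (TensorProduct.map LinearMap.id (Coalgebra.comul : H →ₗ[k] H ⊗[k] H)) ∘ₗ ΔP)
    (hcounit : (TensorProduct.rid k P).toLinearMap ∘ₗ
        (TensorProduct.map LinearMap.id (Coalgebra.counit : H →ₗ[k] k)) ∘ₗ ΔP
      = LinearMap.id)
    (hmul : ∀ f g : P, ΔP (f * g) = ΔP f * ΔP g)
    (Sinv : H →ₗ[k] H)
    (hS1 : (HopfAlgebra.antipode (R := k) (A := H)) ∘ₗ Sinv = LinearMap.id)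
    (hS2 : Sinv ∘ₗ (HopfAlgebra.antipode (R := k) (A := H)) = LinearMap.id) :
    Set.BijOn (fun g : H →ₗ[k] P => g ∘ₗ Sinv)
      {g | LeftData ΔP g} {g | RightData ΔP Sinv g} := by
  classical
  refine ⟨?_, ?_, ?_⟩
  · -- MapsTo
    rintro g ⟨hg1, hgco, g', hgg', hg'g⟩
    refine ⟨?_, ?_, g' ∘ₗ Sinv, ?_, ?_⟩
    · show (g ∘ₗ Sinv) 1 = 1
      rw [LinearMap.comp_apply, Sinv_one Sinv hS2, hg1]
    · show ΔP ∘ₗ (g ∘ₗ Sinv) = adCoactR Sinv (g ∘ₗ Sinv)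
      rw [← LinearMap.comp_assoc, hgco]
      have e1 : adCoactL g
          = TensorProduct.map g LinearMap.id ∘ₗ adCoactL (LinearMap.id : H →ₗ[k] H) := by
        have := adCoactL_comp g LinearMap.id
        rwa [LinearMap.comp_id] at this
      rw [e1, adCoactR_comp Sinv g Sinv, LinearMap.comp_assoc, K1 Sinv hS1 hS2]
    · show twistedConv (g ∘ₗ Sinv) (g' ∘ₗ Sinv) = convUnit
      rw [twistedConv_comp_Sinv Sinv hS1 hS2, hgg', convUnit_comp_Sinv Sinv hS1 hS2]
    · show twistedConv (g' ∘ₗ Sinv) (g ∘ₗ Sinv) = convUnit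
      rw [twistedConv_comp_Sinv Sinv hS1 hS2, hg'g, convUnit_comp_Sinv Sinv hS1 hS2]
  · -- InjOn
    intro g₁ _ g₂ _ he
    simp only at he
    have e2 : (g₁ ∘ₗ Sinv) ∘ₗ (HopfAlgebra.antipode (R := k) (A := H))
        = (g₂ ∘ₗ Sinv) ∘ₗ (HopfAlgebra.antipode (R := k) (A := H)) := by rw [he]
    rwa [LinearMap.comp_assoc, LinearMap.comp_assoc, hS2, LinearMap.comp_id,
      LinearMap.comp_id] at e2
  · -- SurjOn
    rintro gr ⟨h1, hco, g', h3, h4⟩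
    refine ⟨gr ∘ₗ (HopfAlgebra.antipode (R := k) (A := H)), ⟨?_, ?_, g' ∘ₗ
      (HopfAlgebra.antipode (R := k) (A := H)), ?_, ?_⟩, ?_⟩
    · show (gr ∘ₗ (HopfAlgebra.antipode (R := k) (A := H))) 1 = 1
      rw [LinearMap.comp_apply, antipode_one', h1]
    · show ΔP ∘ₗ (gr ∘ₗ (HopfAlgebra.antipode (R := k) (A := H)))
        = adCoactL (gr ∘ₗ (HopfAlgebra.antipode (R := k) (A := H)))
      rw [← LinearMap.comp_assoc, hco]
      have e1 : adCoactR Sinv gr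
          = TensorProduct.map gr LinearMap.id ∘ₗ adCoactR Sinv (LinearMap.id : H →ₗ[k] H) := by
        have := adCoactR_comp Sinv gr LinearMap.id
        rwa [LinearMap.comp_id] at this
      rw [e1, adCoactL_comp gr (HopfAlgebra.antipode (R := k) (A := H)),
        LinearMap.comp_assoc, K2 Sinv hS1 hS2]
    · show conv (gr ∘ₗ (HopfAlgebra.antipode (R := k) (A := H)))
        (g' ∘ₗ (HopfAlgebra.antipode (R := k) (A := H))) = convUnit
      rw [conv_comp_antipode, h3, convUnit_comp_antipode]
    · show conv (g' ∘ₗ (HopfAlgebra.antipode (R := k) (A := H)))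
        (gr ∘ₗ (HopfAlgebra.antipode (R := k) (A := H))) = convUnit
      rw [conv_comp_antipode, h4, convUnit_comp_antipode]
    · show (gr ∘ₗ (HopfAlgebra.antipode (R := k) (A := H))) ∘ₗ Sinv = gr
      rw [LinearMap.comp_assoc, hS1, LinearMap.comp_id]
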